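/- Let b ≥ 2, let w be a word of length l·b^k over {0,...,b-1}, and let z be a word of length l over {0,...,b-1}. Let z^{b^k} denote the concatenation of b^k copies of z, and define w' = w + z^{b^k} mod b (digit-wise addition modulo b). Then w is a (k,l)-nested perfect b-ary necklace if and only if w' is a (k,l)-nested perfect b-ary necklace. -/
import Mathlib


/-- A word `w` (of length `l * b ^ k`, read cyclically, over the alphabet `ZMod b`)
is a `(k, l)`-perfect `b`-ary necklace: each word of length `k` occurs exactly `l`
times, at positions which are pairwise different modulo `l`; equivalently, for each
residue `r` modulo `l` there is exactly one occurrence at a position `≡ r (mod l)`. -/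
def PerfectNecklace (b k l : ℕ) (w : ℕ → ZMod b) : Prop :=
  ∀ v : Fin k → ZMod b, ∀ r, r < l →
    ((Finset.range (l * b ^ k)).filter
      (fun i => i % l = r ∧ ∀ s : Fin k, w ((i + (s : ℕ)) % (l * b ^ k)) = v s)).card = 1

/-- A word of length `l * b ^ k` is a `(k, l)`-nested perfect `b`-ary necklace:
for each `j ∈ {1, …, k}`, each block of length `l * b ^ j` starting at a position
congruent to `1` modulo `l * b ^ j` (i.e. at a multiple of `l * b ^ j` in 0-based
indexing) is a `(j, l)`-perfect necklace. -/
def NestedPerfectNecklace (b k l : ℕ) (w : ℕ → ZMod b) : Prop :=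
  ∀ j, 1 ≤ j → j ≤ k → ∀ a : ℕ, (a + 1) * (l * b ^ j) ≤ l * b ^ k →
    PerfectNecklace b j l (fun i => w (a * (l * b ^ j) + i))

lemma perfect_add_aux (b j l : ℕ) (w z : ℕ → ZMod b)
    (h : PerfectNecklace b j l w) :
    PerfectNecklace b j l (fun i => w i + z (i % l)) := by
  intro v r hr
  have key := h (fun s => v s - z ((r + (s : ℕ)) % l)) r hr
  rw [← key]
  congr 1
  refine Finset.filter_congr fun i _ => ?_
  by_cases him : i % l = r
  · simp only [him, true_and]
    have hmod : ∀ s : ℕ, (i + s) % (l * b ^ j) % l = (r + s) % l := by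
      intro s
      rw [Nat.mod_mod_of_dvd _ (dvd_mul_right l (b ^ j)), Nat.add_mod, him,
        Nat.add_mod r s, Nat.mod_eq_of_lt hr]
    constructor
    · intro hs s
      have := hs s
      rw [hmod s] at this
      rw [eq_sub_iff_add_eq]
      exact this
    · intro hs s
      rw [hmod s]
      have := hs s
      rw [eq_sub_iff_add_eq] at this
      exact this
  · simp [him]

lemma nested_add_aux (b k l : ℕ) (w z : ℕ → ZMod b)
    (h : NestedPerfectNecklace b k l w) :
    NestedPerfectNecklace b k l (fun i => w i + z (i % l)) := by
  intro j hj hjk a ha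
  have hp := perfect_add_aux b j l (fun i => w (a * (l * b ^ j) + i)) z
    (h j hj hjk a ha)
  have hfun : (fun i => (fun i => w i + z (i % l)) (a * (l * b ^ j) + i)) =
      (fun i => (fun i => w (a * (l * b ^ j) + i)) i + z (i % l)) := by
    funext i
    simp only
    congr 2
    rw [show a * (l * b ^ j) + i = a * b ^ j * l + i from by ring]
    simp [Nat.add_mod, Nat.mul_mod_left]
  rw [hfun]
  exact hp

theorem nested_perfect_add_periodic_iff (b k l : ℕ) (hb : 2 ≤ b) (hk : 1 ≤ k)
    (hl : 1 ≤ l) (w : ℕ → ZMod b) (z : ℕ → ZMod b) :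
    NestedPerfectNecklace b k l w ↔
      NestedPerfectNecklace b k l (fun i => w i + z (i % l)) := by
  constructor
  · exact fun h => nested_add_aux b k l w z h
  · intro h
    have h2 := nested_add_aux b k l (fun i => w i + z (i % l)) (fun i => - z i) h
    have : (fun i => (fun i => w i + z (i % l)) i + (fun i => - z i) (i % l)) = w := by
      funext i; simp
    rwa [this] at h2
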